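/- Let n be an even positive integer. There is no plateaued APN function F : 𝔽_2^n → 𝔽_2^n whose value distribution consists of exactly two elements β₁ ≠ β₂ of 𝔽_2^n with |F⁻¹(β₁)| = |F⁻¹(β₂)| = 2 while every other element β of 𝔽_2^n satisfies |F⁻¹(β)| ∈ {0, 3} (equivalently, F has image of size (2^n + 2)/3 with two fibers of size 2 and all remaining nonempty fibers of size 3). -/

import Mathlib

open Finset

/-- The integer-valued Walsh transform of `F : 𝔽_2^n → 𝔽_2^n`:
`W_F(b,a) = ∑_x (-1)^{⟨b,F(x)⟩ + ⟨a,x⟩}`. -/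
def walshB (n : ℕ) (F : (Fin n → ZMod 2) → (Fin n → ZMod 2))
    (b a : Fin n → ZMod 2) : ℤ :=
  ∑ x : Fin n → ZMod 2, (-1 : ℤ) ^ ((∑ i, b i * F x i).val + (∑ i, a i * x i).val)

/-- The imbalance `Nb_F = 2^{-n} ∑_{b ≠ 0} W_F(b,0)²`. -/
noncomputable def NbB (n : ℕ) (F : (Fin n → ZMod 2) → (Fin n → ZMod 2)) : ℝ :=
  ((2 : ℝ) ^ n)⁻¹ *
    ∑ b ∈ univ.filter (fun b : Fin n → ZMod 2 => b ≠ 0), ((walshB n F b 0 : ℝ)) ^ 2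

/-- `F` is APN: for every `a ≠ 0` and every `b`, the equation `F(x+a) + F(x) = b` has at
most 2 solutions. -/
def IsAPNB (n : ℕ) (F : (Fin n → ZMod 2) → (Fin n → ZMod 2)) : Prop :=
  ∀ a : Fin n → ZMod 2, a ≠ 0 → ∀ b : Fin n → ZMod 2,
    (univ.filter fun x => F (x + a) + F x = b).card ≤ 2

/-- The component `F_b` is `t`-plateaued: `|W_F(b,a)| ∈ {0, 2^{(n+t)/2}}` for all `a`,
expressed via squares of the integer Walsh coefficients. -/
def IsTPlateauedB (n : ℕ) (F : (Fin n → ZMod 2) → (Fin n → ZMod 2))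
    (b : Fin n → ZMod 2) (t : ℕ) : Prop :=
  ∀ a : Fin n → ZMod 2, walshB n F b a = 0 ∨ (walshB n F b a) ^ 2 = 2 ^ (n + t)

/-- `F` is plateaued: every nonzero component is `t_b`-plateaued for some `t_b`. -/
def IsPlateauedB (n : ℕ) (F : (Fin n → ZMod 2) → (Fin n → ZMod 2)) : Prop :=
  ∀ b : Fin n → ZMod 2, b ≠ 0 → ∃ t : ℕ, IsTPlateauedB n F b t

/-- The component `F_b` is bent: `|W_F(b,a)| = 2^{n/2}` for all `a`, i.e.
`W_F(b,a)² = 2^n`. -/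
def IsBentB (n : ℕ) (F : (Fin n → ZMod 2) → (Fin n → ZMod 2))
    (b : Fin n → ZMod 2) : Prop :=
  ∀ a : Fin n → ZMod 2, (walshB n F b a) ^ 2 = 2 ^ n

instance (n : ℕ) (F : (Fin n → ZMod 2) → (Fin n → ZMod 2)) (b : Fin n → ZMod 2) :
    Decidable (IsBentB n F b) := by
  unfold IsBentB; infer_instance

namespace AuxPlat

def dotp {n : ℕ} (b x : Fin n → ZMod 2) : ZMod 2 := ∑ i, b i * x i
def ch (u : ZMod 2) : ℤ := (-1) ^ u.val

lemma ch_add : ∀ u v : ZMod 2, ch (u + v) = ch u * ch v := by decide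
lemma ch_zero : ch 0 = 1 := by decide
lemma ch_one : ch 1 = -1 := by decide
lemma ch_sq : ∀ u : ZMod 2, ch u * ch u = 1 := by decide
lemma zmod_ne_zero : ∀ u : ZMod 2, u ≠ 0 → u = 1 := by decide
lemma zmod_add_self : ∀ u : ZMod 2, u + u = 0 := by decide

variable {n : ℕ}

lemma dotp_add_right (a x y : Fin n → ZMod 2) : dotp a (x + y) = dotp a x + dotp a y := by
  simp [dotp, mul_add, Finset.sum_add_distrib]
lemma dotp_add_left (a b x : Fin n → ZMod 2) : dotp (a + b) x = dotp a x + dotp b x := by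
  simp [dotp, add_mul, Finset.sum_add_distrib]
lemma dotp_comm (a x : Fin n → ZMod 2) : dotp a x = dotp x a := by
  simp [dotp, mul_comm]
lemma dotp_zero_left (x : Fin n → ZMod 2) : dotp 0 x = 0 := by simp [dotp]

lemma cardV : Fintype.card (Fin n → ZMod 2) = 2 ^ n := by simp

lemma vadd_self (x : Fin n → ZMod 2) : x + x = 0 := by
  funext i; exact zmod_add_self (x i)

lemma vadd_eq_zero {x y : Fin n → ZMod 2} : x + y = 0 ↔ x = y := by
  constructor
  · intro h
    have := congrArg (· + y) h
    simpa [add_assoc, vadd_self] using this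
  · rintro rfl; exact vadd_self x

lemma orth (y : Fin n → ZMod 2) :
    ∑ v : Fin n → ZMod 2, ch (dotp v y) = if y = 0 then (2 ^ n : ℤ) else 0 := by
  split_ifs with h
  · subst h
    simp [dotp, ch, cardV]
  · obtain ⟨i, hi⟩ : ∃ i, y i ≠ 0 := by
      by_contra h'; push_neg at h'; exact h (funext h')
    have hyi : y i = 1 := zmod_ne_zero _ hi
    set d : Fin n → ZMod 2 := Pi.single i 1 with hd
    have hdy : dotp d y = 1 := by
      rw [dotp, Finset.sum_eq_single i]
      · rw [hd, Pi.single_eq_same, one_mul, hyi]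
      · intro j _ hj; rw [hd, Pi.single_eq_of_ne hj, zero_mul]
      · intro hi'; exact absurd (Finset.mem_univ i) hi'
    have key : ∑ v : Fin n → ZMod 2, ch (dotp v y)
        = ∑ v : Fin n → ZMod 2, ch (dotp (v + d) y) :=
      (Equiv.sum_comp (Equiv.addRight d) (fun v => ch (dotp v y))).symm
    have key2 : ∀ v : Fin n → ZMod 2, ch (dotp (v + d) y) = - ch (dotp v y) := by
      intro v
      rw [dotp_add_left, hdy, ch_add, ch_one]; ring
    simp only [key2] at key
    rw [Finset.sum_neg_distrib] at key
    linarith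

lemma parseval (g : (Fin n → ZMod 2) → ℤ) :
    ∑ a : Fin n → ZMod 2, (∑ s : Fin n → ZMod 2, g s * ch (dotp a s)) ^ 2
      = 2 ^ n * ∑ s : Fin n → ZMod 2, (g s) ^ 2 := by
  have expand : ∀ a : Fin n → ZMod 2,
      (∑ s : Fin n → ZMod 2, g s * ch (dotp a s)) ^ 2
        = ∑ s : Fin n → ZMod 2, ∑ u : Fin n → ZMod 2,
            g s * g u * ch (dotp a (s + u)) := by
    intro a
    rw [sq, Finset.sum_mul_sum]
    refine Finset.sum_congr rfl fun s _ => Finset.sum_congr rfl fun u _ => ?_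
    rw [dotp_add_right, ch_add]; ring
  simp only [expand]
  rw [Finset.sum_comm]
  have inner : ∀ s : Fin n → ZMod 2,
      ∑ a : Fin n → ZMod 2, ∑ u : Fin n → ZMod 2, g s * g u * ch (dotp a (s + u))
        = 2 ^ n * (g s) ^ 2 := by
    intro s
    rw [Finset.sum_comm]
    have : ∀ u : Fin n → ZMod 2,
        ∑ a : Fin n → ZMod 2, g s * g u * ch (dotp a (s + u))
          = g s * g u * (if s + u = 0 then (2 ^ n : ℤ) else 0) := by
      intro u
      rw [← Finset.mul_sum, orth]
    simp only [this]
    rw [Finset.sum_eq_single s]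
    · simp [vadd_eq_zero]; ring
    · intro u _ hu
      rw [if_neg, mul_zero]
      rw [vadd_eq_zero]; exact fun h => hu h.symm
    · intro h; exact absurd (Finset.mem_univ s) h
  simp only [inner]
  rw [← Finset.mul_sum]

def cnt {n : ℕ} (G : (Fin n → ZMod 2) → (Fin n → ZMod 2)) (β : Fin n → ZMod 2) : ℤ :=
  ∑ x : Fin n → ZMod 2, if G x = β then 1 else 0

lemma sum_fiber (G : (Fin n → ZMod 2) → (Fin n → ZMod 2)) (b : Fin n → ZMod 2) :
    ∑ x : Fin n → ZMod 2, ch (dotp b (G x))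
      = ∑ β : Fin n → ZMod 2, cnt G β * ch (dotp b β) := by
  unfold cnt
  simp only [Finset.sum_mul, ite_mul, one_mul, zero_mul]
  rw [Finset.sum_comm]
  refine Finset.sum_congr rfl fun x _ => ?_
  rw [Finset.sum_ite_eq]
  simp

lemma sum_sq_fiber (G : (Fin n → ZMod 2) → (Fin n → ZMod 2)) :
    ∑ b : Fin n → ZMod 2, (∑ x : Fin n → ZMod 2, ch (dotp b (G x))) ^ 2
      = 2 ^ n * ∑ β : Fin n → ZMod 2, (cnt G β) ^ 2 := by
  simp only [sum_fiber]
  exact parseval (cnt G)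

lemma cnt_sum (G : (Fin n → ZMod 2) → (Fin n → ZMod 2)) :
    ∑ β : Fin n → ZMod 2, cnt G β = 2 ^ n := by
  unfold cnt
  rw [Finset.sum_comm]
  have : ∀ x : Fin n → ZMod 2,
      (∑ β : Fin n → ZMod 2, if G x = β then (1:ℤ) else 0) = 1 := by
    intro x; rw [Finset.sum_ite_eq]; simp
  simp only [this]
  simp

lemma cnt_card (G : (Fin n → ZMod 2) → (Fin n → ZMod 2)) (β : Fin n → ZMod 2) :
    cnt G β = ((univ.filter fun x => G x = β).card : ℤ) := by
  rw [Finset.card_filter]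
  push_cast
  rfl

lemma walsh_eq (F : (Fin n → ZMod 2) → (Fin n → ZMod 2)) (b a : Fin n → ZMod 2) :
    walshB n F b a = ∑ x : Fin n → ZMod 2, ch (dotp b (F x) + dotp a x) := by
  unfold walshB
  refine Finset.sum_congr rfl fun x _ => ?_
  rw [ch_add]
  unfold ch dotp
  rw [← pow_add]

/-- autocorrelation -/
def corr {n : ℕ} (F : (Fin n → ZMod 2) → (Fin n → ZMod 2)) (b s : Fin n → ZMod 2) : ℤ :=
  ∑ x : Fin n → ZMod 2, ch (dotp b (F (x + s) + F x))

lemma walsh_sq (F : (Fin n → ZMod 2) → (Fin n → ZMod 2)) (b a : Fin n → ZMod 2) :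
    (walshB n F b a) ^ 2 = ∑ s : Fin n → ZMod 2, corr F b s * ch (dotp a s) := by
  rw [walsh_eq, sq, Finset.sum_mul_sum]
  have inner : ∀ x : Fin n → ZMod 2,
      ∑ y : Fin n → ZMod 2, ch (dotp b (F x) + dotp a x) * ch (dotp b (F y) + dotp a y)
        = ∑ s : Fin n → ZMod 2,
            ch (dotp b (F (x + s) + F x)) * ch (dotp a s) := by
    intro x
    rw [← Equiv.sum_comp (Equiv.addLeft x)
        (fun y => ch (dotp b (F x) + dotp a x) * ch (dotp b (F y) + dotp a y))]
    refine Finset.sum_congr rfl fun s _ => ?_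
    simp only [Equiv.coe_addLeft]
    rw [← ch_add, ← ch_add]
    congr 1
    have h1 : dotp a x + dotp a (x + s) = dotp a s := by
      rw [dotp_add_right]
      rw [← add_assoc]
      have : dotp a x + dotp a x = 0 := by
        have := dotp_add_right a x x
        rw [vadd_self] at this
        rw [← this]
        have h0 : dotp a (0 : Fin n → ZMod 2) = 0 := by
          rw [dotp_comm, dotp_zero_left]
        rw [h0]
      rw [this, zero_add]
    have h2 : dotp b (F x) + dotp b (F (x + s)) = dotp b (F (x + s) + F x) := by
      rw [dotp_add_right, add_comm]
    calc dotp b (F x) + dotp a x + (dotp b (F (x + s)) + dotp a (x + s))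
        = (dotp b (F x) + dotp b (F (x + s))) + (dotp a x + dotp a (x + s)) := by ring
      _ = dotp b (F (x + s) + F x) + dotp a s := by rw [h1, h2]
  simp only [inner]
  rw [Finset.sum_comm]
  refine Finset.sum_congr rfl fun s _ => ?_
  rw [corr, Finset.sum_mul]

lemma walsh_b_zero (F : (Fin n → ZMod 2) → (Fin n → ZMod 2)) (b : Fin n → ZMod 2) :
    walshB n F b 0 = ∑ x : Fin n → ZMod 2, ch (dotp b (F x)) := by
  rw [walsh_eq]
  refine Finset.sum_congr rfl fun x _ => ?_
  rw [dotp_zero_left, add_zero]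

lemma walsh_zero_a (F : (Fin n → ZMod 2) → (Fin n → ZMod 2)) (a : Fin n → ZMod 2) :
    walshB n F 0 a = if a = 0 then (2 ^ n : ℤ) else 0 := by
  rw [walsh_eq]
  have : ∀ x : Fin n → ZMod 2, ch (dotp (0 : Fin n → ZMod 2) (F x) + dotp a x)
      = ch (dotp x a) := by
    intro x
    rw [dotp_zero_left, zero_add, dotp_comm]
  simp only [this]
  exact orth a

lemma sq_eq_two_pow_even {w : ℤ} {m : ℕ} (h : w ^ 2 = 2 ^ m) : Even m := by
  have hn : w.natAbs ^ 2 = 2 ^ m := by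
    have := congrArg Int.natAbs h
    rwa [Int.natAbs_pow, Int.natAbs_pow] at this
  have hdvd : w.natAbs ∣ 2 ^ m := ⟨w.natAbs, by rw [← sq]; exact hn.symm⟩
  obtain ⟨j, hj, hje⟩ := (Nat.dvd_prime_pow Nat.prime_two).mp hdvd
  rw [hje, ← pow_mul] at hn
  have := Nat.pow_right_injective (le_refl 2) hn
  exact ⟨j, by omega⟩

lemma sum_erase_zero {M : Type*} [AddCommGroup M] (f : (Fin n → ZMod 2) → M) :
    ∑ b ∈ univ.erase (0 : Fin n → ZMod 2), f b = (∑ b : Fin n → ZMod 2, f b) - f 0 := by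
  rw [← Finset.sum_erase_add univ f (Finset.mem_univ 0)]
  abel

lemma apn_cnt {n : ℕ} {F : (Fin n → ZMod 2) → (Fin n → ZMod 2)} (hapn : IsAPNB n F)
    {s : Fin n → ZMod 2} (hs : s ≠ 0) (c : Fin n → ZMod 2) :
    cnt (fun x => F (x + s) + F x) c = 0 ∨ cnt (fun x => F (x + s) + F x) c = 2 := by
  rw [cnt_card]
  set S := univ.filter fun x => F (x + s) + F x = c with hS
  rcases Nat.eq_zero_or_pos S.card with h0 | hpos
  · left; exact_mod_cast h0
  · right
    have hle : S.card ≤ 2 := hapn s hs c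
    have hge : 2 ≤ S.card := by
      obtain ⟨x, hx⟩ := Finset.card_pos.mp hpos
      have hx' : F (x + s) + F x = c := (Finset.mem_filter.mp hx).2
      have hxs : x + s ∈ S := by
        rw [hS, Finset.mem_filter]
        refine ⟨Finset.mem_univ _, ?_⟩
        have : x + s + s = x := by rw [add_assoc, vadd_self, add_zero]
        rw [this, add_comm (F x)]
        exact hx'
      have hne : x + s ≠ x := by
        intro h
        apply hs
        have := congrArg (· + x) h
        calc s = x + s + x := by rw [add_comm x s, add_assoc, vadd_self, add_zero]
          _ = 0 := by rw [this, vadd_self]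
      exact Finset.one_lt_card.mpr ⟨x + s, hxs, x, hx, hne⟩
    have : S.card = 2 := le_antisymm hle hge
    exact_mod_cast this

end AuxPlat

open AuxPlat

theorem plateaued_apn_no_second_distribution (n : ℕ) (hn : 0 < n) (hne : Even n)
    (F : (Fin n → ZMod 2) → (Fin n → ZMod 2))
    (hplat : IsPlateauedB n F) (hapn : IsAPNB n F) :
    ¬ ∃ β₁ β₂ : Fin n → ZMod 2, β₁ ≠ β₂ ∧
      (univ.filter fun x => F x = β₁).card = 2 ∧
      (univ.filter fun x => F x = β₂).card = 2 ∧
      ∀ β : Fin n → ZMod 2, β ≠ β₁ → β ≠ β₂ →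
        (univ.filter fun x => F x = β).card = 0 ∨
        (univ.filter fun x => F x = β).card = 3 := by
  rintro ⟨β₁, β₂, hne12, h1, h2, hrest⟩
  set N : ℤ := 2 ^ n with hN
  have hNpos : 0 < N := by positivity
  have hcardE : (((univ.erase (0 : Fin n → ZMod 2)).card : ℤ)) = N - 1 := by
    rw [Finset.card_erase_of_mem (Finset.mem_univ _), Finset.card_univ, cardV]
    have : (1:ℕ) ≤ 2 ^ n := Nat.one_le_two_pow
    push_cast [this]
    rw [hN]
  -- choose plateau amplitudes
  have hex : ∀ b : Fin n → ZMod 2, ∃ t : ℕ, b ≠ 0 → IsTPlateauedB n F b t := by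
    intro b
    by_cases hb : b = 0
    · exact ⟨0, fun h => absurd hb h⟩
    · obtain ⟨t, ht⟩ := hplat b hb
      exact ⟨t, fun _ => ht⟩
  choose t ht using hex
  -- Parseval per b
  have hpars : ∀ b : Fin n → ZMod 2, ∑ a : Fin n → ZMod 2, (walshB n F b a) ^ 2 = N * N := by
    intro b
    have hw : ∀ a : Fin n → ZMod 2, walshB n F b a
        = ∑ x : Fin n → ZMod 2, (fun x => ch (dotp b (F x))) x * ch (dotp a x) := by
      intro a
      rw [walsh_eq]
      exact Finset.sum_congr rfl fun x _ => ch_add _ _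
    simp only [hw]
    rw [parseval]
    have hone : ∀ x : Fin n → ZMod 2, ((fun x => ch (dotp b (F x))) x) ^ 2 = 1 := by
      intro x; rw [sq]; exact ch_sq _
    rw [Finset.sum_congr rfl fun x _ => hone x, Finset.sum_const, Finset.card_univ, cardV,
      nsmul_eq_mul, hN]
    push_cast
    ring
  -- fiber-count square sum from the hypothesized distribution
  have hcntF : ∑ β : Fin n → ZMod 2, (cnt F β) ^ 2 = 3 * N - 4 := by
    have hkey : ∑ β : Fin n → ZMod 2, (3 * cnt F β - (cnt F β) ^ 2) = 4 := by
      have hsub : ∑ β ∈ ({β₁, β₂} : Finset (Fin n → ZMod 2)),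
            (3 * cnt F β - (cnt F β) ^ 2)
          = ∑ β : Fin n → ZMod 2, (3 * cnt F β - (cnt F β) ^ 2) := by
        refine Finset.sum_subset (Finset.subset_univ _) ?_
        intro β _ hβ
        simp only [Finset.mem_insert, Finset.mem_singleton, not_or] at hβ
        rcases hrest β hβ.1 hβ.2 with h | h <;>
          · rw [cnt_card, h]; norm_num
      rw [← hsub, Finset.sum_pair hne12, cnt_card, cnt_card, h1, h2]
      norm_num
    have hs1 : ∑ β : Fin n → ZMod 2, cnt F β = N := by rw [cnt_sum, hN]
    have hsplit : ∑ β : Fin n → ZMod 2, (3 * cnt F β - (cnt F β) ^ 2)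
        = 3 * (∑ β : Fin n → ZMod 2, cnt F β) - ∑ β : Fin n → ZMod 2, (cnt F β) ^ 2 := by
      rw [Finset.sum_sub_distrib, Finset.mul_sum]
    rw [hsplit, hs1] at hkey
    linarith
  -- sum of squared Walsh values at a = 0
  have hWb0 : ∑ b : Fin n → ZMod 2, (walshB n F b 0) ^ 2 = N * (3 * N - 4) := by
    have hbz : ∀ b : Fin n → ZMod 2, (walshB n F b 0) ^ 2
        = (∑ x : Fin n → ZMod 2, ch (dotp b (F x))) ^ 2 := fun b => by rw [walsh_b_zero]
    rw [Finset.sum_congr rfl fun b _ => hbz b, sum_sq_fiber, hcntF, hN]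
  have hW00 : (walshB n F 0 0) ^ 2 = N * N := by
    rw [walsh_zero_a, if_pos rfl, hN]; ring
  have hWE : ∑ b ∈ univ.erase (0 : Fin n → ZMod 2), (walshB n F b 0) ^ 2
      = N * (3 * N - 4) - N * N := by
    rw [sum_erase_zero (fun b => (walshB n F b 0) ^ 2), hWb0, hW00]
  -- fourth moment per b via autocorrelation
  have h4b : ∀ b : Fin n → ZMod 2, ∑ a : Fin n → ZMod 2, (walshB n F b a) ^ 4
      = N * ∑ s : Fin n → ZMod 2, (corr F b s) ^ 2 := by
    intro b
    have hq : ∀ a : Fin n → ZMod 2, (walshB n F b a) ^ 4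
        = (∑ s : Fin n → ZMod 2, corr F b s * ch (dotp a s)) ^ 2 := by
      intro a
      rw [← walsh_sq]; ring
    rw [Finset.sum_congr rfl fun a _ => hq a, parseval, hN]
  -- autocorrelation square sum per s
  have hcorr : ∀ s : Fin n → ZMod 2, ∑ b : Fin n → ZMod 2, (corr F b s) ^ 2
      = N * ∑ c : Fin n → ZMod 2, (cnt (fun x => F (x + s) + F x) c) ^ 2 := by
    intro s
    have hc : ∑ b : Fin n → ZMod 2, (corr F b s) ^ 2
        = ∑ b : Fin n → ZMod 2,
            (∑ x : Fin n → ZMod 2, ch (dotp b ((fun x => F (x + s) + F x) x))) ^ 2 := rfl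
    rw [hc, sum_sq_fiber, hN]
  have hs0 : ∑ c : Fin n → ZMod 2,
      (cnt (fun x => F (x + (0 : Fin n → ZMod 2)) + F x) c) ^ 2 = N * N := by
    have hcnt0 : ∀ c : Fin n → ZMod 2, cnt (fun x => F (x + (0 : Fin n → ZMod 2)) + F x) c
        = if (0 : Fin n → ZMod 2) = c then N else 0 := by
      intro c
      unfold cnt
      have hG : ∀ x : Fin n → ZMod 2, F (x + (0 : Fin n → ZMod 2)) + F x = 0 := by
        intro x; rw [add_zero]; exact vadd_self _
      simp only [hG]
      split_ifs with h
      · rw [Finset.sum_const, Finset.card_univ, cardV, nsmul_eq_mul, mul_one, hN]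
        push_cast
        rfl
      · simp
    rw [Finset.sum_congr rfl fun c _ => by rw [hcnt0 c]]
    rw [Finset.sum_eq_single (0 : Fin n → ZMod 2)]
    · rw [if_pos rfl]; ring
    · intro c _ hc
      rw [if_neg (fun h => hc h.symm)]
      ring
    · intro h; exact absurd (Finset.mem_univ _) h
  have hsne : ∀ s ∈ univ.erase (0 : Fin n → ZMod 2),
      ∑ c : Fin n → ZMod 2, (cnt (fun x => F (x + s) + F x) c) ^ 2 = 2 * N := by
    intro s hsE
    have hs : s ≠ 0 := (Finset.mem_erase.mp hsE).1
    have hterm : ∀ c : Fin n → ZMod 2, (cnt (fun x => F (x + s) + F x) c) ^ 2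
        = 2 * cnt (fun x => F (x + s) + F x) c := by
      intro c
      rcases apn_cnt hapn hs c with h | h <;> rw [h] <;> ring
    rw [Finset.sum_congr rfl fun c _ => hterm c, ← Finset.mul_sum, cnt_sum, hN]
  -- global fourth-moment sum
  have htotal : ∑ b : Fin n → ZMod 2, ∑ a : Fin n → ZMod 2, (walshB n F b a) ^ 4
      = N * (N * (N * N) + (N - 1) * (N * (2 * N))) := by
    rw [Finset.sum_congr rfl fun b _ => h4b b, ← Finset.mul_sum, Finset.sum_comm]
    congr 1
    rw [Finset.sum_congr rfl fun s _ => hcorr s]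
    have hsplit := sum_erase_zero
      (fun s => N * ∑ c : Fin n → ZMod 2, (cnt (fun x => F (x + s) + F x) c) ^ 2)
    have hEsum : ∑ s ∈ univ.erase (0 : Fin n → ZMod 2),
        N * ∑ c : Fin n → ZMod 2, (cnt (fun x => F (x + s) + F x) c) ^ 2
        = ∑ s ∈ univ.erase (0 : Fin n → ZMod 2), N * (2 * N) := by
      refine Finset.sum_congr rfl fun s hs => ?_
      rw [hsne s hs]
    rw [hEsum, Finset.sum_const, nsmul_eq_mul, hcardE, hs0] at hsplit
    linarith
  have hb0four : ∑ a : Fin n → ZMod 2, (walshB n F 0 a) ^ 4 = N * (N * (N * N)) := by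
    rw [Finset.sum_congr rfl fun a _ => by rw [walsh_zero_a F a]]
    rw [Finset.sum_eq_single (0 : Fin n → ZMod 2)]
    · rw [if_pos rfl, hN]; ring
    · intro a _ ha; rw [if_neg ha]; ring
    · intro h; exact absurd (Finset.mem_univ _) h
  have hEfour : ∑ b ∈ univ.erase (0 : Fin n → ZMod 2),
      ∑ a : Fin n → ZMod 2, (walshB n F b a) ^ 4
      = (N - 1) * (N * (2 * N)) * N := by
    rw [sum_erase_zero (fun b => ∑ a : Fin n → ZMod 2, (walshB n F b a) ^ 4), htotal, hb0four]
    ring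
  -- per-b (b ≠ 0) fourth moment via plateau
  have hfour_b : ∀ b ∈ univ.erase (0 : Fin n → ZMod 2),
      ∑ a : Fin n → ZMod 2, (walshB n F b a) ^ 4
      = (2:ℤ) ^ (n + t b) * (N * N) := by
    intro b hbE
    have hb : b ≠ 0 := (Finset.mem_erase.mp hbE).1
    have hterm : ∀ a : Fin n → ZMod 2, (walshB n F b a) ^ 4
        = (2:ℤ) ^ (n + t b) * (walshB n F b a) ^ 2 := by
      intro a
      rcases ht b hb a with h | h
      · rw [h]; ring
      · rw [← h]; ring
    rw [Finset.sum_congr rfl fun a _ => hterm a, ← Finset.mul_sum, hpars]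
  -- extract the plateau-amplitude sum
  have hTsum : ∑ b ∈ univ.erase (0 : Fin n → ZMod 2), (2:ℤ) ^ (n + t b)
      = (N - 1) * (2 * N) := by
    have h1' : ∑ b ∈ univ.erase (0 : Fin n → ZMod 2), (2:ℤ) ^ (n + t b) * (N * N)
        = ((N - 1) * (2 * N)) * (N * N) := by
      rw [← Finset.sum_congr rfl hfour_b, hEfour]; ring
    have hNN : (N * N : ℤ) ≠ 0 := by positivity
    rw [← Finset.sum_mul] at h1'
    exact mul_right_cancel₀ hNN h1'
  -- every b ≠ 0 has some nonzero Walsh value, so n + t b is even, so t b is even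
  have hteven : ∀ b ∈ univ.erase (0 : Fin n → ZMod 2), Even (t b) := by
    intro b hbE
    have hb : b ≠ 0 := (Finset.mem_erase.mp hbE).1
    have hexa : ∃ a : Fin n → ZMod 2, (walshB n F b a) ^ 2 = 2 ^ (n + t b) := by
      by_contra hcon
      push_neg at hcon
      have hall : ∀ a : Fin n → ZMod 2, walshB n F b a = 0 := by
        intro a
        rcases ht b hb a with h | h
        · exact h
        · exact absurd h (hcon a)
      have hzero : ∑ a : Fin n → ZMod 2, (walshB n F b a) ^ 2 = 0 := by
        rw [Finset.sum_congr rfl fun a _ => by rw [hall a]]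
        simp
      rw [hpars] at hzero
      nlinarith
    obtain ⟨a, ha⟩ := hexa
    have heven := sq_eq_two_pow_even ha
    exact (Nat.even_add.mp heven).mp hne
  -- if the Walsh value at 0 vanishes, t b ≥ 2
  have ht2 : ∀ b ∈ univ.erase (0 : Fin n → ZMod 2), walshB n F b 0 = 0 → 2 ≤ t b := by
    intro b hbE hW0
    have hb : b ≠ 0 := (Finset.mem_erase.mp hbE).1
    by_contra hlt
    push_neg at hlt
    have ht0 : t b = 0 := by
      obtain ⟨r, hr⟩ := hteven b hbE
      omega
    have hbound : ∀ a : Fin n → ZMod 2, (walshB n F b a) ^ 2 ≤ N := by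
      intro a
      rcases ht b hb a with h | h
      · rw [h]; positivity
      · rw [h, ht0, hN, add_zero]
    have hsplit := sum_erase_zero (fun a => (walshB n F b a) ^ 2)
    rw [hpars] at hsplit
    simp only [hW0] at hsplit
    have hsumle : ∑ a ∈ univ.erase (0 : Fin n → ZMod 2), (walshB n F b a) ^ 2
        ≤ (((univ.erase (0 : Fin n → ZMod 2)).card : ℤ)) * N := by
      have := Finset.sum_le_card_nsmul (univ.erase (0 : Fin n → ZMod 2))
        (fun a => (walshB n F b a) ^ 2) N (fun a _ => hbound a)
      simpa [nsmul_eq_mul] using this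
    rw [hcardE] at hsumle
    rw [zero_pow (by norm_num : (2:ℕ) ≠ 0), sub_zero] at hsplit
    rw [hsplit] at hsumle
    nlinarith
  -- the deficiency terms
  set z : (Fin n → ZMod 2) → ℤ := fun b => (2:ℤ) ^ (n + t b) - (walshB n F b 0) ^ 2 with hz
  have hzsum : ∑ b ∈ univ.erase (0 : Fin n → ZMod 2), z b = 2 * N := by
    rw [hz]
    rw [Finset.sum_sub_distrib, hTsum, hWE]
    ring
  have hzcases : ∀ b ∈ univ.erase (0 : Fin n → ZMod 2), z b = 0 ∨ 4 * N ≤ z b := by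
    intro b hbE
    have hb : b ≠ 0 := (Finset.mem_erase.mp hbE).1
    rcases ht b hb 0 with h | h
    · right
      have ht2' := ht2 b hbE h
      have hple : (2:ℤ) ^ (n + 2) ≤ 2 ^ (n + t b) := by
        apply pow_le_pow_right₀ (by norm_num)
        omega
      have h4 : (2:ℤ) ^ (n + 2) = 4 * N := by rw [hN, pow_add]; ring
      rw [hz]
      simp only
      rw [h, zero_pow (by norm_num : (2:ℕ) ≠ 0), sub_zero]
      linarith
    · left
      rw [hz]
      simp only
      rw [h, sub_self]
  have hznonneg : ∀ b ∈ univ.erase (0 : Fin n → ZMod 2), 0 ≤ z b := by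
    intro b hbE
    rcases hzcases b hbE with h | h
    · rw [h]
    · linarith
  have hexb : ∃ b ∈ univ.erase (0 : Fin n → ZMod 2), z b ≠ 0 := by
    by_contra hcon
    push_neg at hcon
    have hzz : ∑ b ∈ univ.erase (0 : Fin n → ZMod 2), z b = 0 :=
      Finset.sum_eq_zero fun b hb => hcon b hb
    rw [hzsum] at hzz
    linarith
  obtain ⟨b, hbE, hbne⟩ := hexb
  have hge : 4 * N ≤ z b := by
    rcases hzcases b hbE with h | h
    · exact absurd h hbne
    · exact h
  have hle : z b ≤ ∑ b ∈ univ.erase (0 : Fin n → ZMod 2), z b :=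
    Finset.single_le_sum hznonneg hbE
  rw [hzsum] at hle
  linarith
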